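/- Let χ be an even primitive Dirichlet character modulo q with q > 1, let c be a positive multiple of q, let d be an integer coprime to c, and let d̄ denote the multiplicative inverse of d modulo c. For Re(s) < 0, the meromorphic continuation of L(s, E_{χ,1}, d/c) satisfies the functional equation L(s, E_{χ,1}, d/c) = (2·conj(χ)(d)/c^{2s−1}) · [ Ĵ₀^+(2(1−s))·L(1−s, E_{χ,1}, −d̄/c) + Ĵ₀^−(2(1−s))·L(1−s, E_{χ,1}, d̄/c) ], where Ĵ₀^+(w) := (2π)^{−w}·Γ(w/2)²·cos(πw/2), Ĵ₀^−(w) := (2π)^{−w}·Γ(w/2)², and the two series on the right-hand side converge absolutely (since Re(1−s) > 1). -/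

import Mathlib

open Finset Complex Real Filter

/-- The coefficient `∑_{ab=m} χ a` of the Eisenstein newform `E_{χ,1}`. -/
noncomputable def eisCoef {q : ℕ} (χ : DirichletCharacter ℂ q) (m : ℕ) : ℂ :=
  ∑ ab ∈ m.divisorsAntidiagonal, χ (ab.1 : ZMod q)

/-- The Voronoĭ `L`-series `L(s, E_{χ,1}, x/c) = ∑_{m≥1} (∑_{ab=m} χ a) e(mx/c) m^{-s}`. -/
noncomputable def voronoiL {q : ℕ} (χ : DirichletCharacter ℂ q) (c : ℕ) (x : ℤ) (s : ℂ) : ℂ :=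
  ∑' m : ℕ,
    eisCoef χ m * Complex.exp (2 * π * I * ((m : ℂ) * (x : ℂ) / (c : ℂ))) * (m : ℂ) ^ (-s)

/-- `Ĵ₀^+(w) = (2π)^{-w} Γ(w/2)² cos(πw/2)`. -/
noncomputable def J0plus (w : ℂ) : ℂ :=
  (2 * (π : ℂ)) ^ (-w) * Complex.Gamma (w / 2) ^ 2 * Complex.cos ((π : ℂ) * w / 2)

/-- `Ĵ₀^−(w) = (2π)^{-w} Γ(w/2)²`. -/
noncomputable def J0minus (w : ℂ) : ℂ :=
  (2 * (π : ℂ)) ^ (-w) * Complex.Gamma (w / 2) ^ 2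

namespace Stmt15

open ZMod LSeries

variable {q : ℕ} [NeZero q] {c : ℕ} [NeZero c]

noncomputable def delta (u : ZMod c) : ZMod c → ℂ := fun k => if k = u then 1 else 0

noncomputable def chi' (χ : DirichletCharacter ℂ q) (hqc : q ∣ c) : ZMod c → ℂ :=
  fun u => χ (ZMod.castHom hqc (ZMod q) u)

lemma chi'_mul (χ : DirichletCharacter ℂ q) (hqc : q ∣ c) (a b : ZMod c) :
    chi' χ hqc (a * b) = chi' χ hqc a * chi' χ hqc b := by
  simp [chi', map_mul]

lemma chi'_natCast (χ : DirichletCharacter ℂ q) (hqc : q ∣ c) (a : ℕ) :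
    chi' χ hqc ((a : ZMod c)) = χ (a : ZMod q) := by
  simp [chi', map_natCast]

lemma chi'_intCast (χ : DirichletCharacter ℂ q) (hqc : q ∣ c) (a : ℤ) :
    chi' χ hqc ((a : ZMod c)) = χ (a : ZMod q) := by
  simp [chi', map_intCast]

noncomputable def Fc (χ : DirichletCharacter ℂ q) (x : ZMod c) : ℕ → ℂ :=
  fun m => eisCoef χ m * ZMod.stdAddChar ((m : ZMod c) * x)

noncomputable def G (χ : DirichletCharacter ℂ q) (hqc : q ∣ c) (x : ZMod c) (s : ℂ) : ℂ :=
  ∑ u : ZMod c, ∑ v : ZMod c, chi' χ hqc u * ZMod.stdAddChar (u * v * x) *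
    (ZMod.LFunction (delta u) s * ZMod.LFunction (delta v) s)

/-- Bridging: `voronoiL` is the `LSeries` of `Fc`. -/
lemma voronoiL_eq (χ : DirichletCharacter ℂ q) (hc : c ≠ 0) (y : ℤ) (s : ℂ) :
    voronoiL χ c y s = LSeries (Fc χ ((y : ZMod c))) s := by
  unfold voronoiL LSeries
  congr 1 with m
  rcases eq_or_ne m 0 with rfl | hm
  · simp [eisCoef, LSeries.term]
  · rw [LSeries.term_of_ne_zero hm]
    unfold Fc
    have : ((m : ZMod c) * ((y : ℤ) : ZMod c)) = (((m * y : ℤ)) : ZMod c) := by push_cast; ring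
    rw [this, ZMod.stdAddChar_coe]
    rw [cpow_neg, div_eq_mul_inv]
    congr 2
    push_cast
    ring

set_option linter.unusedSectionVars false
set_option linter.unusedVariables false

/-- Expansion of `Fc` into a finite sum of Dirichlet convolutions. -/
lemma Fc_eq_sum (χ : DirichletCharacter ℂ q) (hqc : q ∣ c) (x : ZMod c) (m : ℕ) :
    Fc χ x m = ∑ u : ZMod c, ∑ v : ZMod c, chi' χ hqc u * ZMod.stdAddChar (u * v * x) *
      (LSeries.convolution (fun a : ℕ => delta u (a : ZMod c))
        (fun b : ℕ => delta v (b : ZMod c)) m) := by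
  simp only [LSeries.convolution_def, Finset.mul_sum]
  have hswap : ∀ u : ZMod c,
      (∑ v : ZMod c, ∑ p ∈ m.divisorsAntidiagonal,
        chi' χ hqc u * ZMod.stdAddChar (u * v * x) *
          (delta u (p.1 : ZMod c) * delta v (p.2 : ZMod c)))
      = ∑ p ∈ m.divisorsAntidiagonal, ∑ v : ZMod c,
        chi' χ hqc u * ZMod.stdAddChar (u * v * x) *
          (delta u (p.1 : ZMod c) * delta v (p.2 : ZMod c)) :=
    fun u => Finset.sum_comm
  simp only [hswap]
  rw [Finset.sum_comm]
  unfold Fc eisCoef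
  rw [Finset.sum_mul]
  refine Finset.sum_congr rfl fun p hp => ?_
  have hm : (p.1 : ℕ) * p.2 = m := (Nat.mem_divisorsAntidiagonal.mp hp).1
  simp only [delta, mul_ite, mul_one, mul_zero, ite_mul, zero_mul, Finset.sum_ite_eq,
    Finset.mem_univ, if_true]
  rw [← chi'_natCast χ hqc]
  congr 1
  congr 1
  rw [← hm]
  push_cast
  ring

lemma term_Fc (χ : DirichletCharacter ℂ q) (hqc : q ∣ c) (x : ZMod c) (s : ℂ) (n : ℕ) :
    LSeries.term (Fc χ x) s n = ∑ u : ZMod c, ∑ v : ZMod c,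
      chi' χ hqc u * ZMod.stdAddChar (u * v * x) *
      LSeries.term (LSeries.convolution (fun a : ℕ => delta u (a : ZMod c))
        (fun b : ℕ => delta v (b : ZMod c))) s n := by
  rcases eq_or_ne n 0 with rfl | hn
  · simp [LSeries.term]
  · simp only [LSeries.term_of_ne_zero hn, Fc_eq_sum χ hqc x n, Finset.sum_div,
      mul_div_assoc]

lemma summable_delta (u : ZMod c) {s : ℂ} (hs : 1 < s.re) :
    LSeriesSummable (fun a : ℕ => delta u (a : ZMod c)) s :=
  ZMod.LSeriesSummable_of_one_lt_re (delta u) hs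

lemma summable_conv (u v : ZMod c) {s : ℂ} (hs : 1 < s.re) :
    LSeriesSummable (LSeries.convolution (fun a : ℕ => delta u (a : ZMod c))
      (fun b : ℕ => delta v (b : ZMod c))) s :=
  (summable_delta u hs).convolution (summable_delta v hs)

lemma LSeriesSummable_Fc (χ : DirichletCharacter ℂ q) (hqc : q ∣ c) (x : ZMod c) {s : ℂ}
    (hs : 1 < s.re) : LSeriesSummable (Fc χ x) s := by
  unfold LSeriesSummable
  rw [show LSeries.term (Fc χ x) s = fun n => ∑ u : ZMod c, ∑ v : ZMod c,
      chi' χ hqc u * ZMod.stdAddChar (u * v * x) *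
      LSeries.term (LSeries.convolution (fun a : ℕ => delta u (a : ZMod c))
        (fun b : ℕ => delta v (b : ZMod c))) s n from funext (term_Fc χ hqc x s)]
  refine summable_sum fun u _ => summable_sum fun v _ => ?_
  exact (summable_conv u v hs).mul_left _

lemma LSeries_Fc_eq_G (χ : DirichletCharacter ℂ q) (hqc : q ∣ c) (x : ZMod c) {s : ℂ}
    (hs : 1 < s.re) : LSeries (Fc χ x) s = G χ hqc x s := by
  unfold LSeries
  rw [show LSeries.term (Fc χ x) s = fun n => ∑ u : ZMod c, ∑ v : ZMod c,
      chi' χ hqc u * ZMod.stdAddChar (u * v * x) *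
      LSeries.term (LSeries.convolution (fun a : ℕ => delta u (a : ZMod c))
        (fun b : ℕ => delta v (b : ZMod c))) s n from funext (term_Fc χ hqc x s)]
  rw [Summable.tsum_finsetSum (fun u _ => summable_sum fun v _ => (summable_conv u v hs).mul_left _)]
  refine Finset.sum_congr rfl fun u _ => ?_
  rw [Summable.tsum_finsetSum (fun v _ => (summable_conv u v hs).mul_left _)]
  refine Finset.sum_congr rfl fun v _ => ?_
  rw [tsum_mul_left]
  congr 1
  rw [show (∑' n, LSeries.term (LSeries.convolution (fun a : ℕ => delta u (a : ZMod c))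
        (fun b : ℕ => delta v (b : ZMod c))) s n) = LSeries (LSeries.convolution
        (fun a : ℕ => delta u (a : ZMod c)) (fun b : ℕ => delta v (b : ZMod c))) s from rfl]
  rw [LSeries_convolution' (summable_delta u hs) (summable_delta v hs),
    ZMod.LFunction_eq_LSeries (delta u) hs, ZMod.LFunction_eq_LSeries (delta v) hs]

lemma G_diff (χ : DirichletCharacter ℂ q) (hqc : q ∣ c) (x : ZMod c) {s : ℂ} (hs : s ≠ 1) :
    DifferentiableAt ℂ (G χ hqc x) s := by
  unfold G
  refine DifferentiableAt.fun_sum fun u _ => DifferentiableAt.fun_sum fun v _ => ?_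
  exact (differentiableAt_const _).mul
    ((ZMod.differentiableAt_LFunction (delta u) s (Or.inl hs)).mul
      (ZMod.differentiableAt_LFunction (delta v) s (Or.inl hs)))

lemma LFunction_eq_sum_delta (Φ : ZMod c → ℂ) (s : ℂ) :
    ZMod.LFunction Φ s = ∑ t : ZMod c, Φ t * ZMod.LFunction (delta t) s := by
  unfold ZMod.LFunction delta
  simp only [Finset.mul_sum]
  rw [Finset.sum_comm]
  refine Finset.sum_congr rfl fun j _ => ?_
  simp only [ite_mul, one_mul, zero_mul, mul_ite, mul_zero, Finset.sum_ite_eq,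
    Finset.mem_univ, if_true]
  ring

lemma delta_neg (u : ZMod c) : (fun k => delta u (-k)) = delta (-u) := by
  funext k
  simp only [delta, neg_eq_iff_eq_neg]

lemma dft_delta (u : ZMod c) : ZMod.dft (delta u) = fun k => ZMod.stdAddChar (-u * k) := by
  funext k
  rw [ZMod.dft_apply]
  simp only [delta, smul_eq_mul, mul_ite, mul_one, mul_zero, Finset.sum_ite_eq',
    Finset.mem_univ, if_true, neg_mul]

lemma charSum (χ : DirichletCharacter ℂ q) (hqc : q ∣ c) (x z : ZMod c) (hxz : x * z = 1)
    (ε₁ ε₂ : ZMod c) (hε₂ : ε₂ * ε₂ = 1) (hχ : chi' χ hqc (-ε₂) = 1) (L : ZMod c → ℂ) :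
    (∑ u : ZMod c, ∑ v : ZMod c, chi' χ hqc u * ZMod.stdAddChar (u * v * x) *
      ((∑ a : ZMod c, ZMod.stdAddChar (ε₁ * u * a) * L a) *
       (∑ b : ZMod c, ZMod.stdAddChar (ε₂ * v * b) * L b)))
    = (c : ℂ) * chi' χ hqc z *
      ∑ a : ZMod c, ∑ b : ZMod c, chi' χ hqc b *
        ZMod.stdAddChar (a * b * (-(ε₁ * ε₂) * z)) * (L a * L b) := by
  -- collapse the `v` sum
  have hcol : ∀ u : ZMod c,
      (∑ v : ZMod c, ZMod.stdAddChar (u * v * x) *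
        ∑ b : ZMod c, ZMod.stdAddChar (ε₂ * v * b) * L b)
      = (c : ℂ) * L (-ε₂ * u * x) := by
    intro u
    have h1 : ∀ v : ZMod c, ZMod.stdAddChar (u * v * x) *
        ∑ b : ZMod c, ZMod.stdAddChar (ε₂ * v * b) * L b
        = ∑ b : ZMod c, ZMod.stdAddChar (v * (u * x + ε₂ * b)) * L b := by
      intro v
      rw [Finset.mul_sum]
      refine Finset.sum_congr rfl fun b _ => ?_
      rw [← mul_assoc, ← AddChar.map_add_eq_mul]
      congr 2
      ring
    simp only [h1]
    rw [Finset.sum_comm]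
    have h2 : ∀ b : ZMod c,
        (∑ v : ZMod c, ZMod.stdAddChar (v * (u * x + ε₂ * b)) * L b)
        = (if u * x + ε₂ * b = 0 then (c : ℂ) else 0) * L b := by
      intro b
      rw [← Finset.sum_mul, AddChar.sum_mulShift _ (ZMod.isPrimitive_stdAddChar c)]
      simp [ZMod.card]
    simp only [h2]
    have hcond : ∀ b : ZMod c, (u * x + ε₂ * b = 0) = (b = -ε₂ * u * x) := by
      intro b
      apply propext
      constructor
      · intro h
        have h' : ε₂ * (u * x + ε₂ * b) = 0 := by rw [h, mul_zero]
        have : ε₂ * ε₂ * b = -(ε₂ * (u * x)) := by linear_combination h'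
        rw [hε₂, one_mul] at this
        rw [this]; ring
      · intro h
        rw [h]
        have : u * x + ε₂ * (-ε₂ * u * x) = (1 - ε₂ * ε₂) * (u * x) := by ring
        rw [this, hε₂]; ring
    simp only [hcond, ite_mul, zero_mul, Finset.sum_ite_eq', Finset.mem_univ, if_true]
  have step1 : (∑ u : ZMod c, ∑ v : ZMod c, chi' χ hqc u * ZMod.stdAddChar (u * v * x) *
      ((∑ a : ZMod c, ZMod.stdAddChar (ε₁ * u * a) * L a) *
       (∑ b : ZMod c, ZMod.stdAddChar (ε₂ * v * b) * L b)))
      = ∑ u : ZMod c, chi' χ hqc u * (∑ a : ZMod c, ZMod.stdAddChar (ε₁ * u * a) * L a) *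
          ((c : ℂ) * L (-ε₂ * u * x)) := by
    refine Finset.sum_congr rfl fun u _ => ?_
    rw [← hcol u, Finset.mul_sum]
    refine Finset.sum_congr rfl fun v _ => ?_
    ring
  rw [step1]
  -- reindex `u = -ε₂ * b * z`
  have hbij : Function.Bijective (fun b : ZMod c => -ε₂ * b * z) := by
    rw [Function.bijective_iff_has_inverse]
    refine ⟨fun u => -ε₂ * u * x, fun b => ?_, fun u => ?_⟩
    · show -ε₂ * (-ε₂ * b * z) * x = b
      calc -ε₂ * (-ε₂ * b * z) * x = (ε₂ * ε₂) * (x * z) * b := by ring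
      _ = b := by rw [hε₂, hxz]; ring
    · show -ε₂ * (-ε₂ * u * x) * z = u
      calc -ε₂ * (-ε₂ * u * x) * z = (ε₂ * ε₂) * (x * z) * u := by ring
      _ = u := by rw [hε₂, hxz]; ring
  rw [← Fintype.sum_bijective _ hbij _ _ (fun b => rfl)]
  have hswap : (∑ a : ZMod c, ∑ b : ZMod c, chi' χ hqc b *
        ZMod.stdAddChar (a * b * (-(ε₁ * ε₂) * z)) * (L a * L b))
      = ∑ b : ZMod c, ∑ a : ZMod c, chi' χ hqc b *
        ZMod.stdAddChar (a * b * (-(ε₁ * ε₂) * z)) * (L a * L b) := Finset.sum_comm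
  rw [hswap, Finset.mul_sum]
  refine Finset.sum_congr rfl fun b _ => ?_
  have harg : -ε₂ * (-ε₂ * b * z) * x = b := by
    calc -ε₂ * (-ε₂ * b * z) * x = (ε₂ * ε₂) * (x * z) * b := by ring
    _ = b := by rw [hε₂, hxz]; ring
  have hchi : chi' χ hqc (-ε₂ * b * z) = chi' χ hqc b * chi' χ hqc z := by
    rw [show -ε₂ * b * z = -ε₂ * (b * z) by ring, chi'_mul, chi'_mul, hχ, one_mul]
  rw [harg, hchi]
  simp only [Finset.mul_sum, Finset.sum_mul]
  refine Finset.sum_congr rfl fun a _ => ?_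
  have harg2 : ε₁ * (-ε₂ * b * z) * a = a * b * (-(ε₁ * ε₂) * z) := by ring
  rw [harg2]
  ring

lemma H_eq_G (χ : DirichletCharacter ℂ q) (hqc : q ∣ c) (y : ZMod c) (s : ℂ) :
    (∑ a : ZMod c, ∑ b : ZMod c, chi' χ hqc b * ZMod.stdAddChar (a * b * y) *
      (ZMod.LFunction (delta a) s * ZMod.LFunction (delta b) s)) = G χ hqc y s := by
  rw [Finset.sum_comm]
  refine Finset.sum_congr rfl fun b _ => Finset.sum_congr rfl fun a _ => ?_
  rw [show a * b * y = b * a * y by ring]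
  ring

lemma FE_delta (u : ZMod c) {s : ℂ} (hs : s.re < 0) :
    ZMod.LFunction (delta u) s = ((c : ℂ) ^ (-s) * (2 * (π : ℂ)) ^ (-(1 - s)) *
      Complex.Gamma (1 - s)) *
      (Complex.exp ((π : ℂ) * I * (1 - s) / 2) *
          ZMod.LFunction (fun k => ZMod.stdAddChar (-u * k)) (1 - s)
        + Complex.exp (-((π : ℂ) * I * (1 - s)) / 2) *
          ZMod.LFunction (fun k => ZMod.stdAddChar (u * k)) (1 - s)) := by
  have h0 : ∀ (n : ℕ), (1 - s) ≠ -(n : ℂ) := by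
    intro n hn
    have := congrArg Complex.re hn
    simp only [Complex.sub_re, Complex.one_re, Complex.neg_re, Complex.natCast_re] at this
    have hn0 : (0 : ℝ) ≤ (n : ℝ) := Nat.cast_nonneg n
    linarith
  have h1 : delta u 0 = 0 ∨ (1 - s : ℂ) ≠ 1 := by
    refine Or.inr fun h => ?_
    have : s = 0 := by linear_combination -h
    rw [this] at hs; simp at hs
  have H := ZMod.LFunction_one_sub (delta u) h0 h1
  rw [show (1 : ℂ) - (1 - s) = s by ring] at H
  rw [H, dft_delta, show (fun x => delta u (-x)) = delta (-u) from delta_neg u, dft_delta]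
  simp only [neg_neg]
  rw [show (1 - s) - 1 = -s by ring]
  ring_nf

lemma chi'_one (χ : DirichletCharacter ℂ q) (hqc : q ∣ c) : chi' χ hqc 1 = 1 := by
  simp only [chi', map_one]

lemma G_FE (χ : DirichletCharacter ℂ q) (hqc : q ∣ c) (x z : ZMod c) (hxz : x * z = 1)
    (hχeven : chi' χ hqc (-1) = 1) {s : ℂ} (hs : s.re < 0) :
    G χ hqc x s = ((c : ℂ) ^ (-s) * (2 * (π : ℂ)) ^ (-(1 - s)) * Complex.Gamma (1 - s)) *
      ((c : ℂ) ^ (-s) * (2 * (π : ℂ)) ^ (-(1 - s)) * Complex.Gamma (1 - s)) *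
      ((c : ℂ) * chi' χ hqc z) *
      ((Complex.exp ((π : ℂ) * I * (1 - s)) + Complex.exp (-((π : ℂ) * I * (1 - s)))) *
          G χ hqc (-z) (1 - s) + 2 * G χ hqc z (1 - s)) := by
  set w : ℂ := 1 - s with hw
  set L : ZMod c → ℂ := fun t => ZMod.LFunction (delta t) w with hL
  set A : ℂ := (c : ℂ) ^ (-s) * (2 * (π : ℂ)) ^ (-w) * Complex.Gamma w with hA
  set P : ℂ := Complex.exp ((π : ℂ) * I * w / 2) with hP
  set M : ℂ := Complex.exp (-((π : ℂ) * I * w) / 2) with hM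
  have hT : ∀ y : ZMod c, ZMod.LFunction (fun k => ZMod.stdAddChar (y * k)) w
      = ∑ t : ZMod c, ZMod.stdAddChar (y * t) * L t := by
    intro y
    rw [LFunction_eq_sum_delta]
  set Sa : ZMod c → ℂ := fun u => ∑ t : ZMod c, ZMod.stdAddChar ((-1 : ZMod c) * u * t) * L t
    with hSa
  set Sb : ZMod c → ℂ := fun u => ∑ t : ZMod c, ZMod.stdAddChar ((1 : ZMod c) * u * t) * L t
    with hSb
  have hFE : ∀ u : ZMod c, ZMod.LFunction (delta u) s = A * (P * Sa u + M * Sb u) := by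
    intro u
    rw [FE_delta u hs, hT (-u), hT u, hSa, hSb]
    simp only [neg_one_mul, one_mul]
    rfl
  have hexp : G χ hqc x s
      = A * A * (P * P * (∑ u : ZMod c, ∑ v : ZMod c, chi' χ hqc u *
            ZMod.stdAddChar (u * v * x) * (Sa u * Sa v))
        + P * M * (∑ u : ZMod c, ∑ v : ZMod c, chi' χ hqc u *
            ZMod.stdAddChar (u * v * x) * (Sa u * Sb v))
        + M * P * (∑ u : ZMod c, ∑ v : ZMod c, chi' χ hqc u *
            ZMod.stdAddChar (u * v * x) * (Sb u * Sa v))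
        + M * M * (∑ u : ZMod c, ∑ v : ZMod c, chi' χ hqc u *
            ZMod.stdAddChar (u * v * x) * (Sb u * Sb v))) := by
    unfold G
    simp only [hFE]
    simp only [mul_add, Finset.mul_sum, ← Finset.sum_add_distrib]
    refine Finset.sum_congr rfl fun u _ => Finset.sum_congr rfl fun v _ => ?_
    ring
  rw [hexp, hSa, hSb]
  beta_reduce
  rw [charSum χ hqc x z hxz (-1) (-1) (by ring) (by rw [neg_neg]; exact chi'_one χ hqc) L]
  rw [charSum χ hqc x z hxz (-1) 1 (by ring) hχeven L]
  rw [charSum χ hqc x z hxz 1 (-1) (by ring) (by rw [neg_neg]; exact chi'_one χ hqc) L]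
  rw [charSum χ hqc x z hxz 1 1 (by ring) hχeven L]
  rw [show (-((-1 : ZMod c) * (-1)) * z) = -z by ring]
  rw [show (-((-1 : ZMod c) * 1) * z) = z by ring]
  rw [show (-((1 : ZMod c) * (-1)) * z) = z by ring]
  rw [show (-((1 : ZMod c) * 1) * z) = -z by ring]
  rw [H_eq_G χ hqc (-z) w, H_eq_G χ hqc z w]
  have hPP : P * P = Complex.exp ((π : ℂ) * I * w) := by
    rw [hP, ← Complex.exp_add]
    congr 1
    ring
  have hMM : M * M = Complex.exp (-((π : ℂ) * I * w)) := by
    rw [hM, ← Complex.exp_add]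
    congr 1
    ring
  have hPM : P * M = 1 := by
    rw [hP, hM, ← Complex.exp_add, show (π : ℂ) * I * w / 2 + -((π : ℂ) * I * w) / 2 = 0 by ring,
      Complex.exp_zero]
  have hMP : M * P = 1 := by rw [mul_comm]; exact hPM
  rw [hPP, hMM, hPM, hMP]
  ring

lemma term_eq (χ : DirichletCharacter ℂ q) (y : ℤ) (s : ℂ) (m : ℕ) :
    eisCoef χ m * Complex.exp (2 * π * I * ((m : ℂ) * ((y : ℤ) : ℂ) / (c : ℂ))) * (m : ℂ) ^ (-s)
      = LSeries.term (Fc χ ((y : ZMod c))) s m := by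
  rcases eq_or_ne m 0 with rfl | hm
  · simp [eisCoef, LSeries.term]
  · rw [LSeries.term_of_ne_zero hm]
    unfold Fc
    have : ((m : ZMod c) * ((y : ℤ) : ZMod c)) = (((m * y : ℤ)) : ZMod c) := by push_cast; ring
    rw [this, ZMod.stdAddChar_coe, cpow_neg, div_eq_mul_inv]
    congr 2
    push_cast
    ring

end Stmt15

open Stmt15

/-- Functional equation for the Voronoĭ `L`-series of `E_{χ,1}` at `d/c`
with `q ∣ c`: for `Re s < 0`, the continuation `f` satisfies
`f s = (2 χ̄(d)/c^{2s−1}) [Ĵ₀^+(2(1−s)) L(1−s,E_{χ,1},−d̄/c) + Ĵ₀^−(2(1−s)) L(1−s,E_{χ,1},d̄/c)]`,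
the two series on the right converging absolutely. -/
theorem stmt_15 (q : ℕ) [NeZero q] (hq : 1 < q) (χ : DirichletCharacter ℂ q)
    (hprim : χ.IsPrimitive) (heven : χ (-1) = 1)
    (c : ℕ) (hc : 0 < c) (hqc : q ∣ c) (d d' : ℤ) (hd : IsCoprime d (c : ℤ))
    (hdd' : d * d' ≡ 1 [ZMOD (c : ℤ)])
    (f : ℂ → ℂ)
    (hf1 : ∀ s : ℂ, 1 < s.re → f s = voronoiL χ c d s)
    (hf2 : ∀ s : ℂ, s ≠ 1 → DifferentiableAt ℂ f s) :
    ∀ s : ℂ, s.re < 0 →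
      (Summable fun m : ℕ =>
        ‖eisCoef χ m * Complex.exp (2 * π * I * ((m : ℂ) * ((-d' : ℤ) : ℂ) / (c : ℂ))) *
          (m : ℂ) ^ (-(1 - s))‖) ∧
      (Summable fun m : ℕ =>
        ‖eisCoef χ m * Complex.exp (2 * π * I * ((m : ℂ) * ((d' : ℤ) : ℂ) / (c : ℂ))) *
          (m : ℂ) ^ (-(1 - s))‖) ∧
      f s = (2 * (starRingEnd ℂ) (χ (d : ZMod q)) / (c : ℂ) ^ (2 * s - 1)) *
        (J0plus (2 * (1 - s)) * voronoiL χ c (-d') (1 - s) +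
          J0minus (2 * (1 - s)) * voronoiL χ c d' (1 - s)) := by
  intro s hs
  haveI : NeZero c := ⟨hc.ne'⟩
  set x : ZMod c := ((d : ℤ) : ZMod c) with hxdef
  set z : ZMod c := ((d' : ℤ) : ZMod c) with hzdef
  have hxz : x * z = 1 := by
    have h := (ZMod.intCast_eq_intCast_iff _ _ _).mpr hdd'
    push_cast at h
    exact h
  have hw : 1 < (1 - s).re := by
    simp only [Complex.sub_re, Complex.one_re]
    linarith
  have hχeven' : chi' χ hqc (-1 : ZMod c) = 1 := by
    have : (ZMod.castHom hqc (ZMod q)) (-1 : ZMod c) = -1 := by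
      rw [map_neg, map_one]
    simp only [chi', this]
    exact heven
  refine ⟨?_, ?_, ?_⟩
  · have hsum := summable_norm_iff.mpr (LSeriesSummable_Fc χ hqc (((-d' : ℤ) : ZMod c)) hw)
    have : (fun m : ℕ =>
        ‖eisCoef χ m * Complex.exp (2 * π * I * ((m : ℂ) * ((-d' : ℤ) : ℂ) / (c : ℂ))) *
          (m : ℂ) ^ (-(1 - s))‖)
        = fun m => ‖LSeries.term (Fc χ (((-d' : ℤ) : ZMod c))) (1 - s) m‖ := by
      funext m
      rw [term_eq χ (-d') (1 - s) m]
    rw [this]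
    exact hsum
  · have hsum := summable_norm_iff.mpr (LSeriesSummable_Fc χ hqc (((d' : ℤ) : ZMod c)) hw)
    have : (fun m : ℕ =>
        ‖eisCoef χ m * Complex.exp (2 * π * I * ((m : ℂ) * ((d' : ℤ) : ℂ) / (c : ℂ))) *
          (m : ℂ) ^ (-(1 - s))‖)
        = fun m => ‖LSeries.term (Fc χ (((d' : ℤ) : ZMod c))) (1 - s) m‖ := by
      funext m
      rw [term_eq χ d' (1 - s) m]
    rw [this]
    exact hsum
  -- the functional equation itself
  have hpre : IsPreconnected ({(1 : ℂ)}ᶜ : Set ℂ) := by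
    refine (isConnected_compl_singleton_of_one_lt_rank ?_ _).isPreconnected
    rw [Complex.rank_real_complex]
    norm_num
  have hanf : AnalyticOnNhd ℂ f ({(1 : ℂ)}ᶜ : Set ℂ) :=
    DifferentiableOn.analyticOnNhd
      (fun t ht => (hf2 t (Set.mem_compl_singleton_iff.mp ht)).differentiableWithinAt)
      isOpen_compl_singleton
  have hanG : AnalyticOnNhd ℂ (G χ hqc x) ({(1 : ℂ)}ᶜ : Set ℂ) :=
    DifferentiableOn.analyticOnNhd
      (fun t ht => (G_diff χ hqc x (Set.mem_compl_singleton_iff.mp ht)).differentiableWithinAt)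
      isOpen_compl_singleton
  have h2mem : (2 : ℂ) ∈ ({(1 : ℂ)}ᶜ : Set ℂ) := by
    rw [Set.mem_compl_singleton_iff]
    norm_num
  have hev : f =ᶠ[nhds (2 : ℂ)] G χ hqc x := by
    have hopen : IsOpen {t : ℂ | 1 < t.re} := isOpen_lt continuous_const Complex.continuous_re
    have h2' : (2 : ℂ) ∈ {t : ℂ | 1 < t.re} := by
      simp only [Set.mem_setOf_eq]
      norm_num
    filter_upwards [hopen.mem_nhds h2'] with t ht
    rw [hf1 t ht, voronoiL_eq χ hc.ne' d t, LSeries_Fc_eq_G χ hqc _ ht]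
  have hEq := hanf.eqOn_of_preconnected_of_eventuallyEq hanG hpre h2mem hev
  have hsmem : s ∈ ({(1 : ℂ)}ᶜ : Set ℂ) := by
    rw [Set.mem_compl_singleton_iff]
    intro h
    rw [h] at hs
    norm_num at hs
  have hfs : f s = G χ hqc x s := hEq hsmem
  have hV1 : voronoiL χ c (-d') (1 - s) = G χ hqc (-z) (1 - s) := by
    rw [voronoiL_eq χ hc.ne' (-d') (1 - s), LSeries_Fc_eq_G χ hqc _ hw]
    congr 1
    push_cast
    ring
  have hV2 : voronoiL χ c d' (1 - s) = G χ hqc z (1 - s) := by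
    rw [voronoiL_eq χ hc.ne' d' (1 - s), LSeries_Fc_eq_G χ hqc _ hw]
  -- the conjugate character value
  have hq1 : (χ (d : ZMod q)) * (χ ((d' : ℤ) : ZMod q)) = 1 := by
    have hmodq : d * d' ≡ 1 [ZMOD (q : ℤ)] :=
      Int.ModEq.of_dvd (Int.natCast_dvd_natCast.mpr hqc) hdd'
    have h := (ZMod.intCast_eq_intCast_iff _ _ _).mpr hmodq
    push_cast at h
    rw [← map_mul, h, map_one]
  have hne : χ (d : ZMod q) ≠ 0 := by
    intro h
    rw [h, zero_mul] at hq1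
    exact zero_ne_one hq1
  have hnorm : ‖χ (d : ZMod q)‖ = 1 := by
    have hu : IsUnit ((d : ℤ) : ZMod q) :=
      IsUnit.of_mul_eq_one _ (by
        have hmodq : d * d' ≡ 1 [ZMOD (q : ℤ)] :=
          Int.ModEq.of_dvd (Int.natCast_dvd_natCast.mpr hqc) hdd'
        have h := (ZMod.intCast_eq_intCast_iff _ _ _).mpr hmodq
        push_cast at h
        exact h)
    have := χ.unit_norm_eq_one hu.unit
    rwa [IsUnit.unit_spec] at this
  have hconj : (starRingEnd ℂ) (χ (d : ZMod q)) = chi' χ hqc z := by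
    have h1 : (starRingEnd ℂ) (χ (d : ZMod q)) * (χ (d : ZMod q)) = 1 := by
      rw [mul_comm, Complex.mul_conj, Complex.normSq_eq_norm_sq, hnorm]
      norm_num
    have hχz : chi' χ hqc z = χ ((d' : ℤ) : ZMod q) := chi'_intCast χ hqc d'
    apply mul_right_cancel₀ hne
    rw [h1, hχz, mul_comm, hq1]
  rw [hfs, G_FE χ hqc x z hxz hχeven' hs, hV1, hV2, hconj]
  unfold J0plus J0minus
  have hcne : (c : ℂ) ≠ 0 := Nat.cast_ne_zero.mpr hc.ne'
  have h2pi : (2 * (π : ℂ)) ≠ 0 := by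
    simp [Complex.ofReal_ne_zero, Real.pi_ne_zero]
  have hG2 : Complex.Gamma (2 * (1 - s) / 2) = Complex.Gamma (1 - s) := by
    rw [show (2 * (1 - s) / 2 : ℂ) = 1 - s by ring]
  have hcos : Complex.cos ((π : ℂ) * (2 * (1 - s)) / 2) = Complex.cos ((π : ℂ) * (1 - s)) := by
    rw [show ((π : ℂ) * (2 * (1 - s)) / 2 : ℂ) = (π : ℂ) * (1 - s) by ring]
  have h2cos : Complex.exp ((π : ℂ) * I * (1 - s)) + Complex.exp (-((π : ℂ) * I * (1 - s)))
      = 2 * Complex.cos ((π : ℂ) * (1 - s)) := by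
    rw [Complex.two_cos, show (π : ℂ) * (1 - s) * I = (π : ℂ) * I * (1 - s) by ring,
      show -((π : ℂ) * (1 - s)) * I = -((π : ℂ) * I * (1 - s)) by ring]
  have hpi2 : (2 * (π : ℂ)) ^ (-(1 - s)) * (2 * (π : ℂ)) ^ (-(1 - s))
      = (2 * (π : ℂ)) ^ (-(2 * (1 - s))) := by
    rw [← Complex.cpow_add _ _ h2pi]
    congr 1
    ring
  have hcp : (c : ℂ) ^ (-s) * (c : ℂ) ^ (-s) * (c : ℂ) = ((c : ℂ) ^ (2 * s - 1))⁻¹ := by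
    rw [← Complex.cpow_neg]
    rw [show (c : ℂ) ^ (-s) * (c : ℂ) ^ (-s) * (c : ℂ)
        = (c : ℂ) ^ (-s) * (c : ℂ) ^ (-s) * (c : ℂ) ^ (1 : ℂ) by rw [Complex.cpow_one]]
    rw [← Complex.cpow_add _ _ hcne, ← Complex.cpow_add _ _ hcne]
    congr 1
    ring
  rw [hG2, hcos, h2cos, div_eq_mul_inv, ← hcp, ← hpi2]
  ring
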